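/- Let Y ⊆ T_n generate the submonoid M_n, and let 𝓜 = (Z_n, Σ, δ, z₀, F) be a DFA based on Y with z₀ ∈ F. Let η, θ ∈ M_n with η ≠ θ and rank(η) = 2. If η(z₀) is unique in the image of η and θ = η̄ (the complement of η), then η and θ are equivalent states in 𝓜*. -/
import Mathlib


/-- The submonoid of transformations of `Fin n` generated by `X`:
all finite compositions of elements of `X` (including the identity). -/
def MGen {n : ℕ} (X : Set (Fin n → Fin n)) : Set (Fin n → Fin n) :=
  {f | ∃ l : List (Fin n → Fin n), (∀ g ∈ l, g ∈ X) ∧ f = l.foldr (· ∘ ·) id}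

/-- The rank of a transformation: the number of elements of its image. -/
def rank {n : ℕ} (f : Fin n → Fin n) : ℕ := (Finset.image f Finset.univ).card

/-- The permutation of `Z_n = {1,…,n}` (coded as `Fin n`, with `i : Fin n` standing for
`i+1 ∈ Z_n`) with cycle decomposition `(1 2 ⋯ k)(k+1 k+2 ⋯ n)`. -/
def twoCycle (n k : ℕ) (i : Fin n) : Fin n :=
  ⟨(if i.val + 1 = k then 0 else if i.val + 1 = n then k else i.val + 1) % n,
    Nat.mod_lt _ i.pos⟩

/-- The set `U_{k,l} ⊆ T_n` (with `l = n - k`): all `γ` such that exactly one of the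
following holds: (1) `γ = α^m` for some `m ≥ 1`, where `α = (1 ⋯ k)(k+1 ⋯ n)`;
(2) `γ(i) = γ(j)` for some `i ∈ {1,…,k}`, `j ∈ {k+1,…,n}`, and some
`m ∈ {k+1,…,n}` is not in the image of `γ`. -/
def Ukl (n k : ℕ) : Set (Fin n → Fin n) :=
  {γ | Xor'
    (∃ m : ℕ, 1 ≤ m ∧ γ = (twoCycle n k)^[m])
    ((∃ i j : Fin n, i.val < k ∧ k ≤ j.val ∧ γ i = γ j) ∧
      ∃ m : Fin n, k ≤ m.val ∧ m ∉ Set.range γ)}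

/-- `M` is a DFA based on `X ⊆ T_n`: each letter acts as an element of `X ∪ {id}`,
and every element of `X` is the action of some letter. -/
def IsBasedOn {n : ℕ} {A : Type} (X : Set (Fin n → Fin n)) (M : DFA A (Fin n)) : Prop :=
  ∃ Ψ : A → (Fin n → Fin n), (∀ a q, M.step q a = Ψ a q) ∧
    (∀ a, Ψ a ∈ X ∪ {id}) ∧ X ⊆ Set.range Ψ

/-- `M` is (a copy of) the DFA `A_{Σ,X}`: based on `X`, with start state `1`,
final-state set `{1}`, the letter actions given by a map `Ψ` that is bijective from an
`|X|`-element subset of the alphabet onto `X` and maps all other letters to the identity. -/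
def IsCanonical {n : ℕ} {A : Type} (X : Set (Fin n → Fin n)) (M : DFA A (Fin n)) : Prop :=
  M.start.val = 0 ∧ M.accept = {q : Fin n | q.val = 0} ∧
    ∃ Ψ : A → (Fin n → Fin n), (∀ a q, M.step q a = Ψ a q) ∧
      ∃ S : Set A, Set.BijOn Ψ S X ∧ ∀ a ∉ S, Ψ a = id

/-- The transformation `η` is a final state of the DFA `𝓜*` built from `𝓜`:
some positive iterate of `η` sends the start state of `𝓜` into its final states. -/
def StarFinal {n : ℕ} {A : Type} (M : DFA A (Fin n)) (η : Fin n → Fin n) : Prop :=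
  ∃ m : ℕ, 1 ≤ m ∧ η^[m] M.start ∈ M.accept

/-- `η` and `θ` are equivalent states of the DFA `𝓜*` built from `𝓜`
(reading a word `w` from state `η` in `𝓜*` leads to the transformation
`q ↦ δ_w(η q)`). -/
def StarEquiv {n : ℕ} {A : Type} (M : DFA A (Fin n)) (η θ : Fin n → Fin n) : Prop :=
  ∀ w : List A,
    StarFinal M (fun q => M.evalFrom (η q) w) ↔ StarFinal M (fun q => M.evalFrom (θ q) w)

/-- `x` is unique in the image of `ρ`: only one point maps to it. -/
def UniqueInImage {n : ℕ} (ρ : Fin n → Fin n) (x : Fin n) : Prop :=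
  ∀ i j : Fin n, ρ i = x → ρ j = x → i = j

/-- For a rank-2 transformation `η` with image `{i,j}`, `θ` is its complement:
`θ` sends points of `η⁻¹(i)` to `j` and points of `η⁻¹(j)` to `i`. -/
def IsCompl2 {n : ℕ} (η θ : Fin n → Fin n) : Prop :=
  ∀ z w : Fin n, η z ≠ η w → θ z = η w

lemma aux_iter_mem {α : Type} (f : α → α) (z a b : α) (hz : f z = a)
    (ha : f a = a ∨ f a = b) (hb : f b = a ∨ f b = b) :
    ∀ m, 1 ≤ m → f^[m] z = a ∨ f^[m] z = b := by
  intro m hm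
  induction m with
  | zero => exact absurd hm (by omega)
  | succ k ih =>
    rcases Nat.eq_zero_or_pos k with hk | hk
    · subst hk; left; simpa using hz
    · rw [Function.iterate_succ_apply']
      rcases ih hk with h | h
      · rw [h]; exact ha
      · rw [h]; exact hb

lemma aux_iter_two {α : Type} (f : α → α) (x : α) : f^[2] x = f (f x) := by
  rw [show (2:ℕ) = 1+1 from rfl, Function.iterate_add_apply, Function.iterate_one]

/-- **Lemma 3.13.** Let `Y` generate `M_n`, and let `𝓜` be a DFA based on `Y` whose
start state is final.  If `η ≠ θ` lie in `M_n`, `rank η = 2`, `η z₀` is unique in the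
image of `η`, and `θ` is the complement of `η`, then `η` and `θ` are equivalent states
of `𝓜*`. -/
theorem lemma_3_13 (n : ℕ) (Y : Set (Fin n → Fin n)) {A : Type} (M : DFA A (Fin n))
    (hbased : IsBasedOn Y M) (hstart : M.start ∈ M.accept)
    (η θ : Fin n → Fin n) (hη : η ∈ MGen Y) (hθ : θ ∈ MGen Y) (hne : η ≠ θ)
    (hrank : rank η = 2) (huniq : UniqueInImage η (η M.start))
    (hcompl : IsCompl2 η θ) :
    StarEquiv M η θ := by
  intro w
  classical
  set z := M.start with hzdef
  have hzi : ∀ q : Fin n, η q = η z → q = z := fun q h => huniq q z h rfl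
  obtain ⟨z₁, hz₁⟩ : ∃ z₁, η z₁ ≠ η z := by
    by_contra h
    push_neg at h
    have himg : Finset.image η Finset.univ = {η z} := by
      apply Finset.eq_singleton_iff_unique_mem.mpr
      refine ⟨Finset.mem_image_of_mem η (Finset.mem_univ z), ?_⟩
      intro x hx
      obtain ⟨q, -, rfl⟩ := Finset.mem_image.mp hx
      exact h q
    have : rank η = 1 := by rw [rank, himg]; simp
    omega
  have hηj : ∀ q, q ≠ z → η q = η z₁ := by
    intro q hq
    by_contra h
    have h1 : η q ≠ η z := fun hh => hq (hzi q hh)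
    have hsub : ({η z, η z₁, η q} : Finset (Fin n)) ⊆ Finset.image η Finset.univ := by
      intro x hx
      simp only [Finset.mem_insert, Finset.mem_singleton] at hx
      rcases hx with rfl | rfl | rfl
      · exact Finset.mem_image_of_mem η (Finset.mem_univ z)
      · exact Finset.mem_image_of_mem η (Finset.mem_univ z₁)
      · exact Finset.mem_image_of_mem η (Finset.mem_univ q)
    have hcard : ({η z, η z₁, η q} : Finset (Fin n)).card = 3 := by
      rw [Finset.card_insert_of_notMem, Finset.card_insert_of_notMem,
        Finset.card_singleton]
      · simp only [Finset.mem_singleton]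
        exact fun hh => h hh.symm
      · simp only [Finset.mem_insert, Finset.mem_singleton]
        push_neg
        exact ⟨hz₁.symm, h1.symm⟩
    have := Finset.card_le_card hsub
    rw [hcard] at this
    rw [rank] at hrank
    omega
  have hθz : θ z = η z₁ := hcompl z z₁ (fun hh => hz₁ hh.symm)
  have hθq : ∀ q, q ≠ z → θ q = η z := fun q hq => hcompl q z (fun hh => hq (hzi q hh))
  set φ : Fin n → Fin n := fun q => M.evalFrom (η q) w with hφdef
  set ψ : Fin n → Fin n := fun q => M.evalFrom (θ q) w with hψdef
  set a : Fin n := M.evalFrom (η z) w with hadef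
  set b : Fin n := M.evalFrom (η z₁) w with hbdef
  have hφz : φ z = a := rfl
  have hφ : ∀ q, q ≠ z → φ q = b := by
    intro q hq
    simp only [hφdef, hηj q hq, hbdef]
  have hψz : ψ z = b := by simp only [hψdef, hθz, hbdef]
  have hψ : ∀ q, q ≠ z → ψ q = a := by
    intro q hq
    simp only [hψdef, hθq q hq, hadef]
  unfold StarFinal
  rw [← hzdef]
  by_cases haz : a = z
  · constructor
    · intro _
      by_cases hbz : b = z
      · exact ⟨1, le_refl 1, by rw [Function.iterate_one, hψz, hbz]; exact hstart⟩
      · refine ⟨2, by omega, ?_⟩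
        rw [aux_iter_two, hψz, hψ b hbz, haz]
        exact hstart
    · intro _
      exact ⟨1, le_refl 1, by rw [Function.iterate_one, hφz, haz]; exact hstart⟩
  · by_cases hbz : b = z
    · constructor
      · intro _
        exact ⟨1, le_refl 1, by rw [Function.iterate_one, hψz, hbz]; exact hstart⟩
      · intro _
        refine ⟨2, by omega, ?_⟩
        rw [aux_iter_two, hφz, hφ a haz, hbz]
        exact hstart
    · have hφa : φ a = b := hφ a haz
      have hφb : φ b = b := hφ b hbz
      have hψb : ψ b = a := hψ b hbz
      have hψa : ψ a = a := hψ a haz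
      constructor
      · rintro ⟨m, hm, hmem⟩
        rcases aux_iter_mem φ z a b hφz (Or.inr hφa) (Or.inr hφb) m hm with h | h
        · refine ⟨2, by omega, ?_⟩
          rw [aux_iter_two, hψz, hψb, ← h]
          exact hmem
        · exact ⟨1, le_refl 1, by rw [Function.iterate_one, hψz, ← h]; exact hmem⟩
      · rintro ⟨m, hm, hmem⟩
        rcases aux_iter_mem ψ z b a hψz (Or.inr hψb) (Or.inr hψa) m hm with h | h
        · refine ⟨2, by omega, ?_⟩
          rw [aux_iter_two, hφz, hφa, ← h]
          exact hmem
        · exact ⟨1, le_refl 1, by rw [Function.iterate_one, hφz, ← h]; exact hmem⟩
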